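/- arXiv:1201.4672 — 2 statements merged into one kernel-verified Lean document; each statement's English description precedes it below -/
import Mathlib

section
/- Let L ≥ 1. Let c_1, …, c_L > 0 with Σ_{k=1}^L c_k = 1 and ρ_1 < ⋯ < ρ_L be real numbers, and let x_1, …, x_L > 0 with Σ_{i=1}^L x_i = 1 and y_1 < ⋯ < y_L be real numbers. If Σ_{i=1}^L x_i y_i^m = Σ_{k=1}^L c_k ρ_k^m for every 1 ≤ m ≤ 2L−1, then x_i = c_i and y_i = ρ_i for all 1 ≤ i ≤ L. -/
open Polynomial Finset

/-- **Identifiability of an L-atomic probability measure from its first 2L-1 moments.**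
If `(x, y)` and `(c, ρ)` are two systems of positive weights summing to one with strictly
increasing atoms, and they share the moments of orders `1, …, 2L-1`, then they coincide. -/
theorem atomic_measure_moment_identifiability (L : ℕ) (hL : 1 ≤ L)
    (c ρ x y : Fin L → ℝ)
    (hc : ∀ k, 0 < c k) (hcsum : ∑ k, c k = 1) (hρ : StrictMono ρ)
    (hx : ∀ i, 0 < x i) (hxsum : ∑ i, x i = 1) (hy : StrictMono y)
    (hmom : ∀ m : ℕ, 1 ≤ m → m ≤ 2 * L - 1 →
      ∑ i, x i * y i ^ m = ∑ k, c k * ρ k ^ m) :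
    (∀ i, x i = c i) ∧ (∀ i, y i = ρ i) := by
  -- moments agree for all m < 2L (including m = 0)
  have hmom' : ∀ m : ℕ, m < 2 * L → ∑ i, x i * y i ^ m = ∑ k, c k * ρ k ^ m := by
    intro m hm
    rcases Nat.eq_zero_or_pos m with rfl | hm1
    · simp [hxsum, hcsum]
    · exact hmom m hm1 (by omega)
  -- any polynomial of degree < 2L has equal "integrals"
  have hpoly : ∀ p : ℝ[X], p.natDegree < 2 * L →
      ∑ i, x i * p.eval (y i) = ∑ k, c k * p.eval (ρ k) := by
    intro p hp
    have h1 : ∀ t : ℝ, p.eval t = ∑ m ∈ range (2 * L), p.coeff m * t ^ m := fun t =>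
      Polynomial.eval_eq_sum_range' hp t
    simp only [h1, Finset.mul_sum]
    rw [Finset.sum_comm, Finset.sum_comm (γ := Fin L)]
    refine Finset.sum_congr rfl fun m hm => ?_
    have := hmom' m (Finset.mem_range.mp hm)
    calc ∑ i, x i * (p.coeff m * y i ^ m) = p.coeff m * ∑ i, x i * y i ^ m := by
          rw [Finset.mul_sum]; exact Finset.sum_congr rfl fun i _ => by ring
      _ = p.coeff m * ∑ k, c k * ρ k ^ m := by rw [this]
      _ = ∑ k, c k * (p.coeff m * ρ k ^ m) := by
          rw [Finset.mul_sum]; exact Finset.sum_congr rfl fun k _ => by ring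
  -- the set of all atoms
  set S : Finset ℝ := Finset.image y univ ∪ Finset.image ρ univ with hS
  have hScard : S.card ≤ 2 * L := by
    calc S.card ≤ (Finset.image y univ).card + (Finset.image ρ univ).card :=
          Finset.card_union_le _ _
      _ ≤ L + L := by
          gcongr <;> exact (Finset.card_image_le).trans (by simp)
      _ = 2 * L := by ring
  -- each y j is some ρ k with matching weight
  have key : ∀ j : Fin L, ∃ k : Fin L, ρ k = y j ∧ x j = c k := by
    intro j
    set t := y j with ht
    set P : ℝ[X] := ∏ r ∈ S.erase t, (X - C r) with hP
    have hPdeg : P.natDegree < 2 * L := by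
      have : P.natDegree = (S.erase t).card := by
        rw [hP, Polynomial.natDegree_prod]
        · simp
        · intro r _; exact X_sub_C_ne_zero r
      rw [this]
      have htS : t ∈ S := by
        simp only [hS, Finset.mem_union, Finset.mem_image]
        exact Or.inl ⟨j, Finset.mem_univ j, rfl⟩
      have := Finset.card_erase_of_mem htS
      omega
    have hPeval : ∀ s : ℝ, s ∈ S → s ≠ t → P.eval s = 0 := by
      intro s hs hst
      rw [hP]
      simp only [Polynomial.eval_prod]
      exact Finset.prod_eq_zero (Finset.mem_erase.mpr ⟨hst, hs⟩) (by simp)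
    have hPt : P.eval t ≠ 0 := by
      rw [hP]
      simp only [Polynomial.eval_prod]
      refine Finset.prod_ne_zero_iff.mpr fun r hr => ?_
      have : r ≠ t := (Finset.mem_erase.mp hr).1
      rw [Polynomial.eval_sub, Polynomial.eval_X, Polynomial.eval_C, sub_ne_zero]
      exact fun h => this h.symm
    have hyS : ∀ i : Fin L, y i ∈ S := fun i => by
      simp only [hS, Finset.mem_union, Finset.mem_image]
      exact Or.inl ⟨i, Finset.mem_univ i, rfl⟩
    have hρS : ∀ k : Fin L, ρ k ∈ S := fun k => by
      simp only [hS, Finset.mem_union, Finset.mem_image]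
      exact Or.inr ⟨k, Finset.mem_univ k, rfl⟩
    have hLHS : ∑ i, x i * P.eval (y i) = x j * P.eval t := by
      refine Finset.sum_eq_single j (fun i _ hij => ?_) (by simp)
      have : y i ≠ t := fun h => hij (hy.injective h)
      rw [hPeval _ (hyS i) this, mul_zero]
    have heq := hpoly P hPdeg
    rw [hLHS] at heq
    by_cases hex : ∃ k : Fin L, ρ k = t
    · obtain ⟨k, hk⟩ := hex
      refine ⟨k, hk, ?_⟩
      have hRHS : ∑ k', c k' * P.eval (ρ k') = c k * P.eval t := by
        rw [← hk]
        refine Finset.sum_eq_single k (fun k' _ hkk => ?_)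
          (fun h => absurd (Finset.mem_univ k) h)
        have : ρ k' ≠ t := fun h => hkk (hρ.injective (h.trans hk.symm))
        rw [hPeval _ (hρS k') this, mul_zero]
      rw [hRHS] at heq
      exact mul_right_cancel₀ hPt heq
    · exfalso
      push_neg at hex
      have hRHS : ∑ k', c k' * P.eval (ρ k') = 0 := by
        refine Finset.sum_eq_zero fun k' _ => ?_
        rw [hPeval _ (hρS k') (hex k'), mul_zero]
      rw [hRHS] at heq
      exact hPt (by
        have := mul_eq_zero.mp heq
        rcases this with h | h
        · exact absurd h (ne_of_gt (hx j))
        · exact h)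
  -- ranges are equal
  have hrange : Set.range y = Set.range ρ := by
    have hsub : Finset.image y univ ⊆ Finset.image ρ univ := by
      intro s hs
      simp only [Finset.mem_image] at hs ⊢
      obtain ⟨j, _, rfl⟩ := hs
      obtain ⟨k, hk, _⟩ := key j
      exact ⟨k, Finset.mem_univ k, hk⟩
    have hcy : (Finset.image y univ).card = L := by
      rw [Finset.card_image_of_injective _ hy.injective]; simp
    have hcρ : (Finset.image ρ univ).card = L := by
      rw [Finset.card_image_of_injective _ hρ.injective]; simp
    have : Finset.image y univ = Finset.image ρ univ :=
      Finset.eq_of_subset_of_card_le hsub (by omega)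
    have h2 := congrArg (fun s : Finset ℝ => (s : Set ℝ)) this
    simpa [Finset.coe_image] using h2
  have hyρ : y = ρ := by
    have inst : WellFoundedLT (Fin L) := inferInstance
    exact (@StrictMono.range_inj (Fin L) ℝ _ _ inst y ρ hy hρ).mp hrange
  constructor
  · intro i
    obtain ⟨k, hk, hxk⟩ := key i
    rw [hyρ] at hk
    rw [hρ.injective hk] at hxk
    exact hxk
  · intro i; rw [hyρ]
end

section
/- Let L ≥ 1, let 0 < ρ_1 < ⋯ < ρ_L be distinct positive reals and c_1, …, c_L > 0 with Σ_{k=1}^L c_k = 1, and set γ_m = Σ_{k=1}^L c_k ρ_k^m for 1 ≤ m ≤ 2L−1. Let, for each n ∈ ℕ and each 1 ≤ m ≤ 2L−1, γ̂_m^{(n)} be a real number with γ̂_m^{(n)} → γ_m as n → ∞. Then there exists n₀ such that for every n ≥ n₀ the system of 2L equations in 2L real unknowns — Σ_{i=1}^L x_i = 1 and Σ_{i=1}^L x_i y_i^m = γ̂_m^{(n)} for 1 ≤ m ≤ 2L−1 — admits exactly one solution (x_1^{(n)},…,x_L^{(n)},y_1^{(n)},…,y_L^{(n)}) with x_i^{(n)}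 > 0 for all i and y_1^{(n)} < ⋯ < y_L^{(n)}; moreover this solution converges to (c_1,…,c_L,ρ_1,…,ρ_L) as n → ∞. -/
open Filter

section Aux

open Polynomial Finset

/-- Vandermonde kernel lemma: a "signed measure" on at most `N` points that kills
all monomials of degree `< N` is zero. -/
lemma vandermonde_kernel {N : ℕ} (S : Finset ℝ) (hS : S.card ≤ N) (w : ℝ → ℝ)
    (h : ∀ m < N, ∑ t ∈ S, w t * t ^ m = 0) : ∀ s ∈ S, w s = 0 := by
  intro s hs
  set P : ℝ[X] := ∏ t ∈ S.erase s, (X - C t) with hP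
  have hdeg : P.natDegree < N := by
    calc P.natDegree ≤ ∑ t ∈ S.erase s, (X - C t).natDegree := Polynomial.natDegree_prod_le _ _
      _ = (S.erase s).card := by simp [natDegree_X_sub_C]
      _ < S.card := Finset.card_erase_lt_of_mem hs
      _ ≤ N := hS
  have key : ∑ t ∈ S, w t * P.eval t = 0 := by
    have heval : ∀ t : ℝ, P.eval t = ∑ m ∈ Finset.range N, P.coeff m * t ^ m := fun t =>
      Polynomial.eval_eq_sum_range' hdeg t
    calc ∑ t ∈ S, w t * P.eval t
        = ∑ t ∈ S, ∑ m ∈ Finset.range N, P.coeff m * (w t * t ^ m) := by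
          refine Finset.sum_congr rfl fun t _ => ?_
          rw [heval t, Finset.mul_sum]
          exact Finset.sum_congr rfl fun m _ => by ring
      _ = ∑ m ∈ Finset.range N, P.coeff m * ∑ t ∈ S, w t * t ^ m := by
          rw [Finset.sum_comm]
          exact Finset.sum_congr rfl fun m _ => by rw [Finset.mul_sum]
      _ = 0 := by
          refine Finset.sum_eq_zero fun m hm => ?_
          rw [h m (Finset.mem_range.mp hm), mul_zero]
  have hsum : ∑ t ∈ S, w t * P.eval t = w s * P.eval s := by
    refine Finset.sum_eq_single_of_mem s hs fun t ht hts => ?_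
    have : P.eval t = 0 := by
      rw [hP, Polynomial.eval_prod]
      exact Finset.prod_eq_zero (Finset.mem_erase.mpr ⟨hts, ht⟩) (by simp)
    rw [this, mul_zero]
  have hPs : P.eval s ≠ 0 := by
    rw [hP, Polynomial.eval_prod]
    refine Finset.prod_ne_zero_iff.mpr fun t ht => ?_
    have : t ≠ s := (Finset.mem_erase.mp ht).1
    simp [sub_ne_zero.mpr (Ne.symm this)]
  have := hsum ▸ key
  exact (mul_eq_zero.mp this).resolve_right hPs

lemma resum {L : ℕ} (S : Finset ℝ) (z u : Fin L → ℝ) (hzS : ∀ i, z i ∈ S) (m : ℕ) :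
    ∑ t ∈ S, (∑ i, if z i = t then u i else 0) * t ^ m = ∑ i, u i * z i ^ m := by
  calc ∑ t ∈ S, (∑ i, if z i = t then u i else 0) * t ^ m
      = ∑ t ∈ S, ∑ i, (if z i = t then u i * z i ^ m else 0) := by
        refine Finset.sum_congr rfl fun t _ => ?_
        rw [Finset.sum_mul]
        refine Finset.sum_congr rfl fun i _ => ?_
        by_cases hit : z i = t
        · simp [hit]
        · simp [hit]
    _ = ∑ i, ∑ t ∈ S, (if z i = t then u i * z i ^ m else 0) := Finset.sum_comm
    _ = ∑ i, u i * z i ^ m := by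
        refine Finset.sum_congr rfl fun i _ => ?_
        rw [Finset.sum_ite_eq]
        simp [hzS i]

/-- Injectivity of the moment map on positive weights and increasing nodes. -/
lemma moment_inj {L : ℕ} {x x' y y' : Fin L → ℝ}
    (hx : ∀ i, 0 < x i) (hx' : ∀ i, 0 < x' i)
    (hy : StrictMono y) (hy' : StrictMono y')
    (h : ∀ m < 2 * L, ∑ i, x i * y i ^ m = ∑ i, x' i * y' i ^ m) :
    x = x' ∧ y = y' := by
  classical
  set S : Finset ℝ := Finset.image y Finset.univ ∪ Finset.image y' Finset.univ with hSdef
  have hyS : ∀ i, y i ∈ S := fun i =>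
    Finset.mem_union_left _ (Finset.mem_image_of_mem y (Finset.mem_univ i))
  have hy'S : ∀ i, y' i ∈ S := fun i =>
    Finset.mem_union_right _ (Finset.mem_image_of_mem y' (Finset.mem_univ i))
  have hcard : S.card ≤ 2 * L := by
    calc S.card ≤ (Finset.image y Finset.univ).card + (Finset.image y' Finset.univ).card :=
        Finset.card_union_le _ _
      _ ≤ L + L := by gcongr <;> exact (Finset.card_image_le).trans (by simp)
      _ = 2 * L := by ring
  set w : ℝ → ℝ := fun t =>
    (∑ i, if y i = t then x i else 0) - (∑ i, if y' i = t then x' i else 0) with hwdef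
  have hw0 : ∀ s ∈ S, w s = 0 := by
    refine vandermonde_kernel S hcard w fun m hm => ?_
    have : ∑ t ∈ S, w t * t ^ m
        = ∑ t ∈ S, (∑ i, if y i = t then x i else 0) * t ^ m
          - ∑ t ∈ S, (∑ i, if y' i = t then x' i else 0) * t ^ m := by
      rw [← Finset.sum_sub_distrib]
      exact Finset.sum_congr rfl fun t _ => by rw [hwdef]; ring
    rw [this, resum S y x hyS m, resum S y' x' hy'S m, h m hm, sub_self]
  have hone : ∀ i : Fin L, (∑ j, if y j = y i then x j else 0) = x i := by
    intro i
    rw [Fintype.sum_eq_single i (fun j hj => by simp [hy.injective.ne hj])]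
    simp
  have hone' : ∀ i : Fin L, (∑ j, if y' j = y' i then x' j else 0) = x' i := by
    intro i
    rw [Fintype.sum_eq_single i (fun j hj => by simp [hy'.injective.ne hj])]
    simp
  have hsub : Finset.image y Finset.univ ⊆ Finset.image y' Finset.univ := by
    intro t ht
    obtain ⟨i, _, rfl⟩ := Finset.mem_image.mp ht
    have h0 := hw0 (y i) (hyS i)
    rw [hwdef] at h0
    simp only at h0
    have hx2 : (∑ j, if y' j = y i then x' j else 0) = x i := by
      have := sub_eq_zero.mp h0
      rw [hone i] at this; exact this.symm
    by_contra hnot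
    have : (∑ j, if y' j = y i then x' j else 0) = 0 := by
      refine Finset.sum_eq_zero fun j _ => ?_
      have : y' j ≠ y i := fun hEq => hnot (hEq ▸ Finset.mem_image_of_mem y' (Finset.mem_univ j))
      simp [this]
    rw [this] at hx2
    exact absurd hx2.symm (ne_of_gt (hx i))
  have himeq : Finset.image y Finset.univ = Finset.image y' Finset.univ := by
    refine Finset.eq_of_subset_of_card_le hsub ?_
    rw [Finset.card_image_of_injective _ hy'.injective,
        Finset.card_image_of_injective _ hy.injective]
  have hyy' : y = y' := by
    haveI : WellFoundedLT (Fin L) := Finite.to_wellFoundedLT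
    refine (hy.range_inj hy').mp ?_
    have h1 : ↑(Finset.image y Finset.univ) = Set.range y := by
      rw [Finset.coe_image, Finset.coe_univ, Set.image_univ]
    rw [← h1, himeq, Finset.coe_image, Finset.coe_univ, Set.image_univ]
  subst hyy'
  refine ⟨funext fun i => ?_, rfl⟩
  have h0 := hw0 (y i) (hyS i)
  rw [hwdef] at h0
  simp only at h0
  have := sub_eq_zero.mp h0
  rw [hone i, hone' i] at this
  exact this

noncomputable def momentMap (L : ℕ) : (Fin L → ℝ) × (Fin L → ℝ) → (Fin (2*L) → ℝ) :=
  fun p m => ∑ i, p.1 i * p.2 i ^ (m : ℕ)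

noncomputable def momentDeriv (L : ℕ) (c ρ : Fin L → ℝ) :
    ((Fin L → ℝ) × (Fin L → ℝ)) →L[ℝ] (Fin (2*L) → ℝ) :=
  ContinuousLinearMap.pi fun m =>
    ∑ i, ((c i) • ((((m:ℕ):ℝ) * ρ i ^ ((m:ℕ)-1)) •
            ((ContinuousLinearMap.proj i).comp (ContinuousLinearMap.snd ℝ _ _)))
       + (ρ i ^ (m:ℕ)) • ((ContinuousLinearMap.proj i).comp (ContinuousLinearMap.fst ℝ _ _)))

lemma momentDeriv_apply (L : ℕ) (c ρ : Fin L → ℝ) (u v : Fin L → ℝ) (m : Fin (2*L)) :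
    momentDeriv L c ρ (u, v) m
      = ∑ i, (u i * ρ i ^ (m:ℕ) + c i * v i * ((m:ℕ):ℝ) * ρ i ^ ((m:ℕ)-1)) := by
  simp only [momentDeriv, ContinuousLinearMap.pi_apply, ContinuousLinearMap.sum_apply,
    ContinuousLinearMap.add_apply, ContinuousLinearMap.smul_apply, ContinuousLinearMap.comp_apply,
    ContinuousLinearMap.coe_fst', ContinuousLinearMap.coe_snd', ContinuousLinearMap.proj_apply,
    smul_eq_mul]
  exact Finset.sum_congr rfl fun i _ => by ring

lemma momentMap_hasStrictFDerivAt (L : ℕ) (c ρ : Fin L → ℝ) :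
    HasStrictFDerivAt (momentMap L) (momentDeriv L c ρ) (c, ρ) := by
  rw [hasStrictFDerivAt_pi']
  intro m
  rw [momentDeriv, ContinuousLinearMap.proj_pi]
  refine HasStrictFDerivAt.fun_sum fun i _ => ?_
  have h1 : HasStrictFDerivAt (fun p : (Fin L → ℝ) × (Fin L → ℝ) => p.1 i)
      ((ContinuousLinearMap.proj i).comp (ContinuousLinearMap.fst ℝ _ _)) (c, ρ) := by
    exact ((ContinuousLinearMap.proj i).comp
      (ContinuousLinearMap.fst ℝ (Fin L → ℝ) (Fin L → ℝ))).hasStrictFDerivAt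
  have h2 : HasStrictFDerivAt (fun p : (Fin L → ℝ) × (Fin L → ℝ) => p.2 i ^ (m:ℕ))
      ((((m:ℕ):ℝ) * ρ i ^ ((m:ℕ)-1)) •
        ((ContinuousLinearMap.proj i).comp (ContinuousLinearMap.snd ℝ _ _))) (c, ρ) :=
    (hasStrictDerivAt_pow (m:ℕ) (ρ i)).comp_hasStrictFDerivAt
      (x := ((c, ρ) : (Fin L → ℝ) × (Fin L → ℝ)))
      (by exact ((ContinuousLinearMap.proj i).comp
        (ContinuousLinearMap.snd ℝ (Fin L → ℝ) (Fin L → ℝ))).hasStrictFDerivAt)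
  exact h1.mul h2

lemma momentDeriv_ker (L : ℕ) (hL : 1 ≤ L) (c ρ : Fin L → ℝ)
    (hρ : Function.Injective ρ) (hc : ∀ k, c k ≠ 0) (u v : Fin L → ℝ)
    (h0 : ∀ m : ℕ, m < 2 * L →
      ∑ i, (u i * ρ i ^ m + c i * v i * (m : ℝ) * ρ i ^ (m - 1)) = 0) :
    u = 0 ∧ v = 0 := by
  classical
  set Λ : ℝ[X] →ₗ[ℝ] ℝ :=
    { toFun := fun P => ∑ i, (u i * P.eval (ρ i) + c i * v i * P.derivative.eval (ρ i))
      map_add' := by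
        intro P Q
        rw [← Finset.sum_add_distrib]
        refine Finset.sum_congr rfl fun i _ => ?_
        simp only [eval_add, derivative_add, eval_add]
        ring
      map_smul' := by
        intro a P
        simp only [smul_eq_mul, RingHom.id_apply, Finset.mul_sum, derivative_smul, eval_smul,
          smul_eq_mul]
        refine Finset.sum_congr rfl fun i _ => ?_
        ring } with hΛdef
  have hX : ∀ m : ℕ, m < 2 * L → Λ ((X : ℝ[X]) ^ m) = 0 := by
    intro m hm
    have hrel := h0 m hm
    rw [hΛdef]
    simp only [LinearMap.coe_mk, AddHom.coe_mk, eval_pow, eval_X, derivative_X_pow, eval_mul,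
      eval_C, eval_pow]
    rw [← hrel]
    exact Finset.sum_congr rfl fun i _ => by ring
  have hΛ : ∀ P : ℝ[X], P.natDegree < 2 * L → Λ P = 0 := by
    intro P hP
    conv_lhs => rw [P.as_sum_range' (2 * L) hP]
    rw [map_sum]
    refine Finset.sum_eq_zero fun m hm => ?_
    rw [← Polynomial.smul_X_eq_monomial, map_smul, hX m (Finset.mem_range.mp hm), smul_zero]
  have hv : v = 0 := by
    funext j
    set Q : ℝ[X] := ∏ k ∈ Finset.univ.erase j, (X - C (ρ k)) ^ 2 with hQdef
    set Pj : ℝ[X] := (X - C (ρ j)) * Q with hPjdef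
    have hdeg : Pj.natDegree < 2 * L := by
      calc Pj.natDegree ≤ (X - C (ρ j)).natDegree + Q.natDegree := natDegree_mul_le
        _ ≤ 1 + ∑ k ∈ Finset.univ.erase j, ((X - C (ρ k)) ^ 2).natDegree := by
            gcongr
            · exact le_of_eq (natDegree_X_sub_C _)
            · exact natDegree_prod_le _ _
        _ ≤ 1 + ∑ k ∈ Finset.univ.erase j, 2 := by
            gcongr with k hk
            rw [natDegree_pow, natDegree_X_sub_C]
        _ = 1 + 2 * (L - 1) := by
            rw [Finset.sum_const, smul_eq_mul, Finset.card_erase_of_mem (Finset.mem_univ j)]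
            simp [mul_comm]
        _ < 2 * L := by omega
    have hQeval : ∀ i, i ≠ j → Q.eval (ρ i) = 0 := by
      intro i hij
      rw [hQdef, eval_prod]
      refine Finset.prod_eq_zero (Finset.mem_erase.mpr ⟨hij, Finset.mem_univ i⟩) ?_
      simp
    have hPeval : ∀ i, Pj.eval (ρ i) = 0 := by
      intro i
      by_cases hij : i = j
      · subst hij; simp [hPjdef]
      · rw [hPjdef, eval_mul, hQeval i hij, mul_zero]
    have hderiv : Pj.derivative = Q + (X - C (ρ j)) * Q.derivative := by
      rw [hPjdef, derivative_mul, derivative_X_sub_C, one_mul]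
    have hQd : ∀ i, i ≠ j → Q.derivative.eval (ρ i) = 0 := by
      intro i hij
      have hi : i ∈ Finset.univ.erase j := Finset.mem_erase.mpr ⟨hij, Finset.mem_univ i⟩
      have hfac : Q = (X - C (ρ i)) ^ 2 *
          ∏ k ∈ (Finset.univ.erase j).erase i, (X - C (ρ k)) ^ 2 :=
        (Finset.mul_prod_erase _ _ hi).symm
      rw [hfac, derivative_mul, derivative_pow, derivative_X_sub_C]
      simp
    have hPd : ∀ i, i ≠ j → Pj.derivative.eval (ρ i) = 0 := by
      intro i hij
      rw [hderiv, eval_add, eval_mul, hQeval i hij, hQd i hij, mul_zero, add_zero]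
    have hPdj : Pj.derivative.eval (ρ j) = Q.eval (ρ j) := by
      rw [hderiv, eval_add, eval_mul]
      simp
    have hQj : Q.eval (ρ j) ≠ 0 := by
      rw [hQdef, eval_prod]
      refine Finset.prod_ne_zero_iff.mpr fun k hk => ?_
      have hkj : ρ k ≠ ρ j := fun hEq => (Finset.mem_erase.mp hk).1 (hρ hEq)
      simp [pow_eq_zero_iff, sub_eq_zero]
      exact fun hEq => hkj (by rw [hEq])
    have hval : Λ Pj = c j * v j * Q.eval (ρ j) := by
      rw [hΛdef]
      simp only [LinearMap.coe_mk, AddHom.coe_mk]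
      rw [Fintype.sum_eq_single j (fun i hij => by
        rw [hPeval i, hPd i hij, mul_zero, mul_zero, add_zero])]
      rw [hPeval j, hPdj, mul_zero, zero_add]
    have := hΛ Pj hdeg
    rw [hval] at this
    rcases mul_eq_zero.mp this with h | h
    · rcases mul_eq_zero.mp h with h' | h'
      · exact absurd h' (hc j)
      · exact h'
    · exact absurd h hQj
  subst hv
  refine ⟨?_, rfl⟩
  have hrel : ∀ m : ℕ, m < 2 * L → ∑ i, u i * ρ i ^ m = 0 := by
    intro m hm
    have := h0 m hm
    simpa using this
  set S : Finset ℝ := Finset.image ρ Finset.univ with hS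
  have hρS : ∀ i, ρ i ∈ S := fun i => Finset.mem_image_of_mem ρ (Finset.mem_univ i)
  have hcard : S.card ≤ 2 * L := le_trans Finset.card_image_le (by simp; omega)
  have h := vandermonde_kernel S hcard (fun t => ∑ i, if ρ i = t then u i else 0)
    (fun m hm => by rw [resum S ρ u hρS m]; exact hrel m hm)
  funext j
  have h2 : (∑ i, if ρ i = ρ j then u i else 0) = 0 := h (ρ j) (hρS j)
  rw [Fintype.sum_eq_single j (fun i hij => by simp [hρ.ne hij])] at h2
  simpa using h2

end Aux

/-- **Existence, uniqueness and consistency of the moment-based estimator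
(deterministic core of Theorem 4).**
If `γ̂_m^{(n)} → γ_m = ∑_k c_k ρ_k^m` for `1 ≤ m ≤ 2L-1`, then for all large `n` the
system `∑ x_i = 1`, `∑ x_i y_i^m = γ̂_m^{(n)}` (`1 ≤ m ≤ 2L-1`) has exactly one solution
with positive weights `x_i` and strictly increasing nodes `y_1 < ⋯ < y_L`, and this
solution converges to `(c, ρ)`. -/
theorem moment_estimator_exists_unique_consistent (L : ℕ) (hL : 1 ≤ L)
    (ρ c : Fin L → ℝ) (hρpos : ∀ k, 0 < ρ k) (hρ : StrictMono ρ)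
    (hc : ∀ k, 0 < c k) (hcsum : ∑ k, c k = 1)
    (γhat : ℕ → ℕ → ℝ)
    (hconv : ∀ m : ℕ, 1 ≤ m → m ≤ 2 * L - 1 →
      Tendsto (fun n => γhat n m) atTop (nhds (∑ k, c k * ρ k ^ m))) :
    ∃ n₀ : ℕ, ∃ x y : ℕ → Fin L → ℝ,
      (∀ n, n₀ ≤ n →
        ((∀ i, 0 < x n i) ∧ StrictMono (y n) ∧ (∑ i, x n i) = 1 ∧
          (∀ m : ℕ, 1 ≤ m → m ≤ 2 * L - 1 → ∑ i, x n i * y n i ^ m = γhat n m)) ∧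
        (∀ x' y' : Fin L → ℝ,
          (∀ i, 0 < x' i) → StrictMono y' → (∑ i, x' i) = 1 →
          (∀ m : ℕ, 1 ≤ m → m ≤ 2 * L - 1 → ∑ i, x' i * y' i ^ m = γhat n m) →
          x' = x n ∧ y' = y n)) ∧
      (∀ i, Tendsto (fun n => x n i) atTop (nhds (c i)) ∧
            Tendsto (fun n => y n i) atTop (nhds (ρ i))) := by
  classical
  -- injectivity of the derivative
  have hderivinj : Function.Injective (momentDeriv L c ρ) := by
    intro p q hpq
    have h0 : momentDeriv L c ρ (p - q) = 0 := by rw [map_sub, hpq, sub_self]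
    have happ : ∀ m : ℕ, m < 2 * L →
        ∑ i, ((p.1 - q.1) i * ρ i ^ m + c i * (p.2 - q.2) i * (m : ℝ) * ρ i ^ (m - 1)) = 0 := by
      intro m hm
      have h1 : momentDeriv L c ρ (p.1 - q.1, p.2 - q.2) (⟨m, hm⟩ : Fin (2 * L)) = 0 := by
        rw [show ((p.1 - q.1, p.2 - q.2) : (Fin L → ℝ) × (Fin L → ℝ)) = p - q from rfl, h0]
        rfl
      rwa [momentDeriv_apply] at h1
    obtain ⟨hu, hv⟩ := momentDeriv_ker L hL c ρ hρ.injective (fun k => (hc k).ne')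
      (p.1 - q.1) (p.2 - q.2) happ
    have h1 : p.1 = q.1 := sub_eq_zero.mp hu
    have h2 : p.2 = q.2 := sub_eq_zero.mp hv
    exact Prod.ext h1 h2
  have hdim : Module.finrank ℝ ((Fin L → ℝ) × (Fin L → ℝ))
      = Module.finrank ℝ (Fin (2 * L) → ℝ) := by
    rw [Module.finrank_prod, Module.finrank_fin_fun, Module.finrank_fin_fun]
    omega
  have hlinj : Function.Injective (momentDeriv L c ρ).toLinearMap := hderivinj
  let e : ((Fin L → ℝ) × (Fin L → ℝ)) ≃L[ℝ] (Fin (2 * L) → ℝ) :=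
    ((momentDeriv L c ρ).toLinearMap.linearEquivOfInjective hlinj hdim).toContinuousLinearEquiv
  have hf : HasStrictFDerivAt (momentMap L)
      (e : ((Fin L → ℝ) × (Fin L → ℝ)) →L[ℝ] (Fin (2 * L) → ℝ)) (c, ρ) := by
    have hcoe : (e : ((Fin L → ℝ) × (Fin L → ℝ)) →L[ℝ] (Fin (2 * L) → ℝ))
        = momentDeriv L c ρ := by
      refine ContinuousLinearMap.ext fun p => ?_
      rfl
    rw [hcoe]
    exact momentMap_hasStrictFDerivAt L c ρ
  set PH := hf.toOpenPartialHomeomorph (momentMap L) with hPH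
  have hmem : ((c, ρ) : (Fin L → ℝ) × (Fin L → ℝ)) ∈ PH.source :=
    hf.mem_toOpenPartialHomeomorph_source
  have hcoePH : ⇑PH = momentMap L := hf.toOpenPartialHomeomorph_coe
  -- the admissible open set
  set U : Set ((Fin L → ℝ) × (Fin L → ℝ)) :=
    {p | (∀ i, 0 < p.1 i) ∧ StrictMono p.2} with hU
  have hUopen : IsOpen U := by
    have h1 : IsOpen {p : (Fin L → ℝ) × (Fin L → ℝ) | ∀ i, 0 < p.1 i} := by
      rw [Set.setOf_forall]
      exact isOpen_iInter_of_finite fun i =>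
        isOpen_lt continuous_const ((continuous_apply i).comp continuous_fst)
    have h2 : IsOpen {p : (Fin L → ℝ) × (Fin L → ℝ) | StrictMono p.2} := by
      have heq : {p : (Fin L → ℝ) × (Fin L → ℝ) | StrictMono p.2}
          = ⋂ (i : Fin L) (j : Fin L) (_ : i < j), {p | p.2 i < p.2 j} := by
        ext p
        simp only [Set.mem_setOf_eq, Set.mem_iInter]
        exact ⟨fun hp i j hij => hp hij, fun hp a b hab => hp a b hab⟩
      rw [heq]
      exact isOpen_iInter_of_finite fun i => isOpen_iInter_of_finite fun j =>
        isOpen_iInter_of_finite fun _ =>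
          isOpen_lt ((continuous_apply i).comp continuous_snd)
            ((continuous_apply j).comp continuous_snd)
    exact h1.and h2
  have hp₀U : ((c, ρ) : (Fin L → ℝ) × (Fin L → ℝ)) ∈ U := ⟨hc, hρ⟩
  set V : Set ((Fin L → ℝ) × (Fin L → ℝ)) := PH.source ∩ U with hV
  have hVopen : IsOpen V := PH.open_source.inter hUopen
  have hp₀V : ((c, ρ) : (Fin L → ℝ) × (Fin L → ℝ)) ∈ V := ⟨hmem, hp₀U⟩
  set W : Set (Fin (2 * L) → ℝ) := PH '' V with hW
  have hWopen : IsOpen W := PH.isOpen_image_of_subset_source hVopen Set.inter_subset_left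
  have hγW : momentMap L (c, ρ) ∈ W := ⟨(c, ρ), hp₀V, by rw [hcoePH]⟩
  -- the estimated moment vectors
  set G : ℕ → Fin (2 * L) → ℝ := fun n m => if (m : ℕ) = 0 then 1 else γhat n (m : ℕ) with hGdef
  have hG : Tendsto G atTop (nhds (momentMap L (c, ρ))) := by
    rw [tendsto_pi_nhds]
    intro m
    by_cases hm : (m : ℕ) = 0
    · have hval : momentMap L (c, ρ) m = 1 := by
        rw [momentMap]
        simp only [hm, pow_zero, mul_one]
        exact hcsum
      simp only [hGdef, hm, if_pos rfl, hval]
      simp only [if_true]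
      exact tendsto_const_nhds
    · have hmlt : (m : ℕ) < 2 * L := m.isLt
      have h1 : momentMap L (c, ρ) m = ∑ k, c k * ρ k ^ (m : ℕ) := rfl
      simp only [hGdef, if_neg hm]
      rw [h1]
      exact hconv (m : ℕ) (Nat.one_le_iff_ne_zero.mpr hm) (by omega)
  obtain ⟨n₀, hn₀⟩ := Filter.eventually_atTop.mp (hG.eventually_mem (hWopen.mem_nhds hγW))
  refine ⟨n₀, fun n => (PH.symm (G n)).1, fun n => (PH.symm (G n)).2, ?_, ?_⟩
  · intro n hn
    have hGW : G n ∈ W := hn₀ n hn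
    obtain ⟨q, hqV, hq⟩ := hGW
    have hsymm : PH.symm (G n) = q := by rw [← hq, PH.left_inv hqV.1]
    have hqU : q ∈ U := hqV.2
    have hmom : ∀ m : Fin (2 * L), (∑ i, q.1 i * q.2 i ^ (m : ℕ)) = G n m := by
      intro m
      have : momentMap L q = G n := by rw [← hcoePH, hq]
      exact congrFun this m
    have hq1 : (∑ i, q.1 i) = 1 := by
      have := hmom ⟨0, by omega⟩
      simp only [hGdef] at this
      simpa using this
    have hqm : ∀ m : ℕ, 1 ≤ m → m ≤ 2 * L - 1 → ∑ i, q.1 i * q.2 i ^ m = γhat n m := by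
      intro m hm1 hm2
      have hmlt : m < 2 * L := by omega
      have := hmom ⟨m, hmlt⟩
      simp only [hGdef] at this
      rw [if_neg (by omega : ¬ m = 0)] at this
      exact this
    constructor
    · simp only [hsymm]
      exact ⟨hqU.1, hqU.2, hq1, hqm⟩
    · intro x' y' hx' hy' hs' hm'
      have hall : ∀ m : ℕ, m < 2 * L → ∑ i, x' i * y' i ^ m = ∑ i, q.1 i * q.2 i ^ m := by
        intro m hm
        rcases Nat.eq_zero_or_pos m with rfl | hmpos
        · simpa using (hs'.trans hq1.symm)
        · rw [hm' m hmpos (by omega), hqm m hmpos (by omega)]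
      obtain ⟨h1, h2⟩ := moment_inj hx' hqU.1 hy' hqU.2 hall
      simp only [hsymm]
      exact ⟨h1, h2⟩
  · have hWsub : W ⊆ PH.target := by
      rintro t ⟨q, hq, rfl⟩
      exact PH.map_source hq.1
    have hcont : ContinuousAt PH.symm (momentMap L (c, ρ)) :=
      PH.continuousAt_symm (hWsub hγW)
    have hlim : PH.symm (momentMap L (c, ρ)) = (c, ρ) := by
      have : momentMap L (c, ρ) = PH (c, ρ) := by rw [hcoePH]
      rw [this, PH.left_inv hmem]
    have hfull : Tendsto (fun n => PH.symm (G n)) atTop (nhds ((c, ρ))) := by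
      have := hcont.tendsto.comp hG
      rwa [hlim] at this
    intro i
    constructor
    · have hcc : Continuous fun p : (Fin L → ℝ) × (Fin L → ℝ) => p.1 i :=
        (continuous_apply i).comp continuous_fst
      exact (hcc.tendsto _).comp hfull
    · have hcc : Continuous fun p : (Fin L → ℝ) × (Fin L → ℝ) => p.2 i :=
        (continuous_apply i).comp continuous_snd
      exact (hcc.tendsto _).comp hfull
end
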